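/- arXiv:1204.0849 — 5 statements merged into one kernel-verified Lean document; each statement's English description precedes it below -/
import Mathlib

section
/- For any two points x, y in the hypergrid [k]^n and parameters α ≤ β, the shortest-path distance d(x,y) in the directed grid graph (where edges increasing one coordinate by 1 have length -α and edges decreasing one coordinate by 1 have length β) equals β·‖x - hcd(x,y)‖₁ - α·‖y - hcd(x,y)‖₁, where hcd(x,y) is the coordinatewise minimum of x and y. -/
/-- membership in the hypergrid `[k]^n` (coordinates in `{1,…,k}`). -/
def inGrid {n : ℕ} (k : ℕ) (x : Fin n → ℤ) : Prop := ∀ i, 1 ≤ x i ∧ x i ≤ (k : ℤ)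

/-- coordinatewise minimum. -/
def hcd {n : ℕ} (x y : Fin n → ℤ) : Fin n → ℤ := fun i => min (x i) (y i)

/-- the closed-form pseudo-distance `β‖x - hcd(x,y)‖₁ - α‖y - hcd(x,y)‖₁`. -/
noncomputable def gd {n : ℕ} (α β : ℝ) (x y : Fin n → ℤ) : ℝ :=
  β * ∑ i, ((x i - hcd x y i : ℤ) : ℝ) - α * ∑ i, ((y i - hcd x y i : ℤ) : ℝ)

/-- adjacency in the grid graph: `ℓ₁` distance exactly `1`. -/
def adj {n : ℕ} (x y : Fin n → ℤ) : Prop := (∑ i, |x i - y i|) = 1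

/-- length of a single step: `-α` if it increases a coordinate, `β` if it decreases one. -/
noncomputable def stepLen {n : ℕ} (α β : ℝ) (x y : Fin n → ℤ) : ℝ :=
  if (∀ i, x i ≤ y i) then -α else β

/-- total length of a directed path. -/
noncomputable def pathLen {n : ℕ} (α β : ℝ) : List (Fin n → ℤ) → ℝ
  | x :: y :: rest => stepLen α β x y + pathLen α β (y :: rest)
  | _ => 0

lemma sum_sub_single {n : ℕ} (f g : Fin n → ℤ) (j : Fin n)
    (h : ∀ i, i ≠ j → f i = g i) : (∑ i, f i) - (∑ i, g i) = f j - g j := by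
  rw [← Finset.sum_sub_distrib]
  exact Finset.sum_eq_single j (fun b _ hb => by rw [h b hb]; ring)
    (fun hj => absurd (Finset.mem_univ j) hj)

lemma gd_self {n : ℕ} (α β : ℝ) (x : Fin n → ℤ) : gd α β x x = 0 := by
  simp [gd, hcd]

lemma gd_decomp {n : ℕ} (α β : ℝ) (x z y : Fin n → ℤ) (j : Fin n)
    (hij : ∀ i, i ≠ j → z i = x i) :
    gd α β x y = gd α β z y
      + β * (((x j - min (x j) (y j)) - (z j - min (z j) (y j)) : ℤ) : ℝ)
      - α * (((min (z j) (y j) - min (x j) (y j)) : ℤ) : ℝ) := by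
  unfold gd hcd
  have h1 : (∑ i, (x i - min (x i) (y i))) - (∑ i, (z i - min (z i) (y i)))
      = (x j - min (x j) (y j)) - (z j - min (z j) (y j)) :=
    sum_sub_single _ _ j (fun i hi => by
      show x i - min (x i) (y i) = z i - min (z i) (y i)
      rw [hij i hi])
  have h2 : (∑ i, (y i - min (x i) (y i))) - (∑ i, (y i - min (z i) (y i)))
      = (min (z j) (y j)) - (min (x j) (y j)) := by
    have h := sum_sub_single (fun i => y i - min (x i) (y i))
      (fun i => y i - min (z i) (y i)) j (fun i hi => by
        show y i - min (x i) (y i) = y i - min (z i) (y i)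
        rw [hij i hi])
    omega
  have e1 : (∑ i, (x i - min (x i) (y i)))
      = (∑ i, (z i - min (z i) (y i))) + ((x j - min (x j) (y j)) - (z j - min (z j) (y j))) := by
    omega
  have e2 : (∑ i, (y i - min (x i) (y i)))
      = (∑ i, (y i - min (z i) (y i))) + ((min (z j) (y j)) - (min (x j) (y j))) := by
    omega
  simp only [← Int.cast_sum]
  rw [e1, e2]
  push_cast
  ring

lemma adj_cases {n : ℕ} {x z : Fin n → ℤ} (h : adj x z) :
    ∃ j : Fin n, (∀ i, i ≠ j → z i = x i) ∧ (z j = x j + 1 ∨ z j = x j - 1) := by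
  unfold adj at h
  have hex : ∃ j : Fin n, |x j - z j| ≠ 0 := by
    by_contra hc
    push_neg at hc
    simp [hc] at h
  obtain ⟨j, hj⟩ := hex
  have hsplit := Finset.add_sum_erase Finset.univ (fun i => |x i - z i|) (Finset.mem_univ j)
  rw [h] at hsplit
  have hnn : (0:ℤ) ≤ ∑ i ∈ Finset.univ.erase j, |x i - z i| :=
    Finset.sum_nonneg (fun i _ => abs_nonneg _)
  have h1 : |x j - z j| = 1 := by
    have := abs_nonneg (x j - z j); omega
  have hz : ∑ i ∈ Finset.univ.erase j, |x i - z i| = 0 := by omega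
  have hall := (Finset.sum_eq_zero_iff_of_nonneg (fun i _ => abs_nonneg (x i - z i))).mp hz
  refine ⟨j, fun i hi => ?_, ?_⟩
  · have h0 := hall i (Finset.mem_erase.mpr ⟨hi, Finset.mem_univ i⟩)
    have := abs_eq_zero.mp h0; omega
  · rcases (abs_eq (by norm_num : (0:ℤ) ≤ 1)).mp h1 with h' | h' <;> omega

lemma stepLen_up {n : ℕ} (α β : ℝ) {x z : Fin n → ℤ} {j : Fin n}
    (hij : ∀ i, i ≠ j → z i = x i) (hj : z j = x j + 1) : stepLen α β x z = -α := by
  unfold stepLen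
  rw [if_pos]
  intro i
  by_cases hi : i = j
  · subst hi; omega
  · rw [hij i hi]

lemma stepLen_down {n : ℕ} (α β : ℝ) {x z : Fin n → ℤ} {j : Fin n}
    (hj : z j = x j - 1) : stepLen α β x z = β := by
  unfold stepLen
  rw [if_neg]
  intro hall
  have := hall j
  omega

lemma step_ineq {n : ℕ} {α β : ℝ} (hαβ : α ≤ β) (x z y : Fin n → ℤ) (hadj : adj x z) :
    gd α β x y ≤ stepLen α β x z + gd α β z y := by
  obtain ⟨j, hij, hj⟩ := adj_cases hadj
  rw [gd_decomp α β x z y j hij]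
  rcases hj with hj | hj
  · rw [stepLen_up α β hij hj]
    rcases le_or_gt (y j) (x j) with hc | hc
    · have m1 : min (x j) (y j) = y j := min_eq_right hc
      have m2 : min (z j) (y j) = y j := min_eq_right (by omega)
      rw [m1, m2, hj]
      push_cast
      ring_nf
      linarith
    · have m1 : min (x j) (y j) = x j := min_eq_left (by omega)
      have m2 : min (z j) (y j) = z j := min_eq_left (by omega)
      rw [m1, m2, hj]
      push_cast
      ring_nf
      linarith
  · rw [stepLen_down α β hj]
    rcases le_or_gt (x j) (y j) with hc | hc
    · have m1 : min (x j) (y j) = x j := min_eq_left hc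
      have m2 : min (z j) (y j) = z j := min_eq_left (by omega)
      rw [m1, m2, hj]
      push_cast
      ring_nf
      linarith
    · have m1 : min (x j) (y j) = y j := min_eq_right (by omega)
      have m2 : min (z j) (y j) = y j := min_eq_right (by omega)
      rw [m1, m2, hj]
      push_cast
      ring_nf
      linarith

lemma pathLen_ge {n : ℕ} {α β : ℝ} (hαβ : α ≤ β) (y : Fin n → ℤ) :
    ∀ p : List (Fin n → ℤ), p.Chain' adj → ∀ x, p.head? = some x →
      p.getLast? = some y → gd α β x y ≤ pathLen α β p := by
  intro p
  induction p with
  | nil => intro _ x hx _; simp at hx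
  | cons a tl ih =>
    intro hchain x hx hy
    simp only [List.head?_cons, Option.some.injEq] at hx
    rw [← hx]
    match tl, hchain, hy, ih with
    | [], _, hy, _ =>
      simp only [List.getLast?_singleton, Option.some.injEq] at hy
      subst hy
      simp [pathLen, gd_self]
    | b :: rest, hchain, hy, ih =>
      unfold List.Chain' at hchain; rw [List.isChain_cons_cons] at hchain
      have hlast : (b :: rest).getLast? = some y := by
        rwa [List.getLast?_cons_cons] at hy
      have h1 := ih hchain.2 b rfl hlast
      have h2 := step_ineq hαβ a b y hchain.1
      show gd α β a y ≤ stepLen α β a b + pathLen α β (b :: rest)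
      linarith

lemma exists_path {n k : ℕ} (α β : ℝ) :
    ∀ N : ℕ, ∀ x y : Fin n → ℤ, inGrid k x → inGrid k y →
      (∑ i, |x i - y i|).toNat = N →
      ∃ p : List (Fin n → ℤ), p.head? = some x ∧ p.getLast? = some y ∧
        (∀ z ∈ p, inGrid k z) ∧ p.Chain' adj ∧ pathLen α β p = gd α β x y := by
  intro N
  induction N using Nat.strong_induction_on with
  | _ N IH =>
  intro x y hx hy hN
  by_cases hxy : x = y
  · subst hxy
    exact ⟨[x], rfl, rfl, by simpa using hx, List.isChain_singleton _, by simp [pathLen, gd_self]⟩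
  · obtain ⟨j, hj⟩ := Function.ne_iff.mp hxy
    have hnn : (0:ℤ) ≤ ∑ i, |x i - y i| := Finset.sum_nonneg (fun i _ => abs_nonneg _)
    have hjle : |x j - y j| ≤ ∑ i, |x i - y i| :=
      Finset.single_le_sum (fun i _ => abs_nonneg (x i - y i)) (Finset.mem_univ j)
    have hjpos : (1:ℤ) ≤ |x j - y j| := by
      rcases abs_pos.mpr (sub_ne_zero.mpr hj) with h; omega
    -- pick the step direction
    rcases lt_or_gt_of_ne hj with hlt | hgt
    · -- x j < y j : step up
      set z : Fin n → ℤ := Function.update x j (x j + 1) with hz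
      have hzj : z j = x j + 1 := Function.update_self j _ x
      have hzi : ∀ i, i ≠ j → z i = x i := fun i hi => Function.update_of_ne hi _ x
      have hzgrid : inGrid k z := by
        intro i
        by_cases hi : i = j
        · rw [hi, hzj]
          have := (hx j).1; have := (hy j).2; omega
        · rw [hzi i hi]; exact hx i
      have hadj : adj x z := by
        unfold adj
        rw [Finset.sum_eq_single j (fun i _ hi => by rw [hzi i hi]; simp)
          (fun h => absurd (Finset.mem_univ j) h)]
        rw [hzj]; simp
      have hdist : ∑ i, |z i - y i| = (∑ i, |x i - y i|) - 1 := by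
        have h := sum_sub_single (fun i => |z i - y i|) (fun i => |x i - y i|) j
          (fun i hi => by show |z i - y i| = |x i - y i|; rw [hzi i hi])
        have : |z j - y j| = |x j - y j| - 1 := by
          rw [hzj, abs_of_nonpos (by omega), abs_of_nonpos (by omega)]; ring
        omega
      have hlt' : (∑ i, |z i - y i|).toNat < N := by omega
      obtain ⟨p, hph, hpl, hpg, hpc, hplen⟩ := IH _ hlt' z y hzgrid hy rfl
      match p, hph, hpl, hpg, hpc, hplen with
      | b :: rest, hph, hpl, hpg, hpc, hplen =>
        simp only [List.head?_cons, Option.some.injEq] at hph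
        subst hph
        refine ⟨x :: z :: rest, rfl, by rwa [List.getLast?_cons_cons], ?_, ?_, ?_⟩
        · intro w hw
          rcases List.mem_cons.mp hw with h | h
          · subst h; exact hx
          · exact hpg w h
        · unfold List.Chain'; rw [List.isChain_cons_cons]; exact ⟨hadj, hpc⟩
        · show stepLen α β x z + pathLen α β (z :: rest) = gd α β x y
          rw [hplen, stepLen_up α β hzi hzj]
          rw [gd_decomp α β x z y j hzi]
          have m1 : min (x j) (y j) = x j := min_eq_left (by omega)
          have m2 : min (z j) (y j) = z j := min_eq_left (by omega)
          rw [m1, m2, hzj]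
          push_cast
          ring
    · -- x j > y j : step down
      set z : Fin n → ℤ := Function.update x j (x j - 1) with hz
      have hzj : z j = x j - 1 := Function.update_self j _ x
      have hzi : ∀ i, i ≠ j → z i = x i := fun i hi => Function.update_of_ne hi _ x
      have hzgrid : inGrid k z := by
        intro i
        by_cases hi : i = j
        · rw [hi, hzj]
          have := (hy j).1; have := (hx j).2; omega
        · rw [hzi i hi]; exact hx i
      have hadj : adj x z := by
        unfold adj
        rw [Finset.sum_eq_single j (fun i _ hi => by rw [hzi i hi]; simp)
          (fun h => absurd (Finset.mem_univ j) h)]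
        rw [hzj]; simp
      have hdist : ∑ i, |z i - y i| = (∑ i, |x i - y i|) - 1 := by
        have h := sum_sub_single (fun i => |z i - y i|) (fun i => |x i - y i|) j
          (fun i hi => by show |z i - y i| = |x i - y i|; rw [hzi i hi])
        have : |z j - y j| = |x j - y j| - 1 := by
          rw [hzj, abs_of_nonneg (by omega), abs_of_nonneg (by omega)]; ring
        omega
      have hlt' : (∑ i, |z i - y i|).toNat < N := by omega
      obtain ⟨p, hph, hpl, hpg, hpc, hplen⟩ := IH _ hlt' z y hzgrid hy rfl
      match p, hph, hpl, hpg, hpc, hplen with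
      | b :: rest, hph, hpl, hpg, hpc, hplen =>
        simp only [List.head?_cons, Option.some.injEq] at hph
        subst hph
        refine ⟨x :: z :: rest, rfl, by rwa [List.getLast?_cons_cons], ?_, ?_, ?_⟩
        · intro w hw
          rcases List.mem_cons.mp hw with h | h
          · subst h; exact hx
          · exact hpg w h
        · unfold List.Chain'; rw [List.isChain_cons_cons]; exact ⟨hadj, hpc⟩
        · show stepLen α β x z + pathLen α β (z :: rest) = gd α β x y
          rw [hplen, stepLen_down α β hzj]
          rw [gd_decomp α β x z y j hzi]
          have m1 : min (x j) (y j) = y j := min_eq_right (by omega)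
          have m2 : min (z j) (y j) = y j := min_eq_right (by omega)
          rw [m1, m2, hzj]
          push_cast
          ring

/-- The shortest-path distance from `x` to `y` in the directed grid graph equals
`β‖x - hcd(x,y)‖₁ - α‖y - hcd(x,y)‖₁`. -/
theorem shortest_path_eq_formula {n k : ℕ} (α β : ℝ) (hαβ : α ≤ β)
    (x y : Fin n → ℤ) (hx : inGrid k x) (hy : inGrid k y) :
    IsLeast {L : ℝ | ∃ p : List (Fin n → ℤ),
        p.head? = some x ∧ p.getLast? = some y ∧
        (∀ z ∈ p, inGrid k z) ∧ p.Chain' adj ∧ pathLen α β p = L}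
      (gd α β x y) := by
  constructor
  · obtain ⟨p, h1, h2, h3, h4, h5⟩ :=
      exists_path (k := k) α β (∑ i, |x i - y i|).toNat x y hx hy rfl
    exact ⟨p, h1, h2, h3, h4, h5⟩
  · rintro L ⟨p, h1, h2, h3, h4, h5⟩
    rw [← h5]
    exact pathLen_ge hαβ y p h4 x h1 h2
end

section
/- The pseudo-distance d on the hypergrid satisfies the triangle inequality: for all x, y, z in [k]^n, d(x,y) ≤ d(x,z) + d(z,y). -/
lemma gd_pointwise (α β : ℝ) (hαβ : α ≤ β) (a b c : ℤ) :
    β * ((a - min a b : ℤ) : ℝ) - α * ((b - min a b : ℤ) : ℝ) ≤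
      (β * ((a - min a c : ℤ) : ℝ) - α * ((c - min a c : ℤ) : ℝ)) +
      (β * ((c - min c b : ℤ) : ℝ) - α * ((b - min c b : ℤ) : ℝ)) := by
  have h1 := le_total a b
  have h2 := le_total a c
  have h3 := le_total c b
  rcases h1 with h1 | h1 <;> rcases h2 with h2 | h2 <;> rcases h3 with h3 | h3 <;>
    simp only [min_eq_left, min_eq_right, h1, h2, h3] <;> push_cast <;>
    nlinarith [(Int.cast_le (R := ℝ)).2 h1, (Int.cast_le (R := ℝ)).2 h2,
      (Int.cast_le (R := ℝ)).2 h3]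

/-- Triangle inequality for the pseudo-distance. -/
theorem gd_triangle_inequality {n k : ℕ} (α β : ℝ) (hαβ : α ≤ β)
    (x y z : Fin n → ℤ) (hx : inGrid k x) (hy : inGrid k y) (hz : inGrid k z) :
    gd α β x y ≤ gd α β x z + gd α β z y := by
  simp only [gd, hcd, Finset.mul_sum, ← Finset.sum_sub_distrib, ← Finset.sum_add_distrib]
  exact Finset.sum_le_sum fun i _ => gd_pointwise α β hαβ (x i) (y i) (z i)
end

section
/- The pseudo-distance d satisfies strict positivity on cycles: for any cycle of distinct points x₁, x₂, …, x_s, x_{s+1} = x₁ with s ≥ 2 and α < β, we have Σ_{c=1}^{s} d(x_c, x_{c+1}) > 0. -/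
/-- Strict positivity of the pseudo-distance on cycles of distinct points. -/
theorem gd_positive_on_cycles {n k s : ℕ} (α β : ℝ) (hαβ : α < β) (hs : 2 ≤ s)
    (x : ℕ → (Fin n → ℤ))
    (hinj : ∀ c < s, ∀ c' < s, x c = x c' → c = c')
    (hg : ∀ c < s, inGrid k (x c)) (hcyc : x s = x 0) :
    0 < ∑ c ∈ Finset.range s, gd α β (x c) (x (c + 1)) := by
  set T : ℤ := ∑ c ∈ Finset.range s, ∑ i, (x c i - hcd (x c) (x (c+1)) i) with hT
  have hxy : ∑ c ∈ Finset.range s, ∑ i, (x (c+1) i : ℤ)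
      = ∑ c ∈ Finset.range s, ∑ i, (x c i : ℤ) := by
    have h1 := Finset.sum_range_succ' (fun c => ∑ i, (x c i : ℤ)) s
    have h2 := Finset.sum_range_succ (fun c => ∑ i, (x c i : ℤ)) s
    simp only [hcyc] at h2
    linarith
  have hshift : ∑ c ∈ Finset.range s, ∑ i, (x (c+1) i - hcd (x c) (x (c+1)) i) = T := by
    rw [hT]
    simp only [Finset.sum_sub_distrib]
    rw [hxy]
  -- the whole sum equals (β - α) * T
  have hsum : ∑ c ∈ Finset.range s, gd α β (x c) (x (c + 1)) = (β - α) * (T : ℝ) := by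
    have : ∀ c, gd α β (x c) (x (c + 1))
        = β * ((∑ i, (x c i - hcd (x c) (x (c+1)) i) : ℤ) : ℝ)
          - α * ((∑ i, (x (c+1) i - hcd (x c) (x (c+1)) i) : ℤ) : ℝ) := by
      intro c; simp [gd]
    simp only [this]
    rw [Finset.sum_sub_distrib, ← Finset.mul_sum, ← Finset.mul_sum,
      ← Int.cast_sum, ← Int.cast_sum, ← hT, hshift]
    ring
  rw [hsum]
  have hTnonneg : ∀ c ∈ Finset.range s, 0 ≤ ∑ i, (x c i - hcd (x c) (x (c+1)) i) := by
    intro c _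
    apply Finset.sum_nonneg
    intro i _
    simp [hcd]
  have hTpos : 0 < T := by
    rcases lt_or_eq_of_le (Finset.sum_nonneg hTnonneg) with h | h
    · exact h
    -- T = 0: derive contradiction
    exfalso
    have hzero : ∀ c ∈ Finset.range s, ∑ i, (x c i - hcd (x c) (x (c+1)) i) = 0 :=
      (Finset.sum_eq_zero_iff_of_nonneg hTnonneg).1 h.symm
    have hle : ∀ c < s, ∀ i, x c i ≤ x (c+1) i := by
      intro c hc i
      have := (Finset.sum_eq_zero_iff_of_nonneg (by intro i _; simp [hcd])).1
        (hzero c (Finset.mem_range.2 hc)) i (Finset.mem_univ i)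
      simp [hcd] at this
      omega
    have hmono : ∀ c ≤ s, ∀ i, x 0 i ≤ x c i := by
      intro c
      induction c with
      | zero => intro _ i; exact le_refl _
      | succ m ih =>
        intro hm i
        exact le_trans (ih (by omega) i) (hle m (by omega) i)
    have h01 : x 0 = x 1 := by
      funext i
      have ha : x 0 i ≤ x 1 i := hmono 1 (by omega) i
      have hb : x 1 i ≤ x s i := by
        -- show ∀ c, 1 ≤ c → c ≤ s → x 1 i ≤ x c i
        have key : ∀ c, 1 ≤ c → c ≤ s → x 1 i ≤ x c i := by
          intro c
          induction c with
          | zero => omega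
          | succ m ih =>
            intro h1 h2
            rcases Nat.eq_or_lt_of_le h1 with he | hl
            · rw [← he]
            · exact le_trans (ih (by omega) (by omega)) (hle m (by omega) i)
        exact key s (by omega) (le_refl s)
      rw [hcyc] at hb
      omega
    have := hinj 0 (by omega) 1 (by omega) h01
    omega
  have hT' : (0 : ℝ) < (T : ℝ) := by exact_mod_cast hTpos
  exact mul_pos (by linarith) hT'
end

section
/- A function f : [k]^n → ℝ is (α,β)-Lipschitz if and only if for all x, y in [k]^n, f(x) - f(y) ≤ d(x,y). -/
/-- `f` is `(α,β)`-Lipschitz on `[k]^n`: every unit increment of one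
coordinate (staying inside the grid) changes `f` by an amount in `[α,β]`. -/
def IsABLip {n : ℕ} (k : ℕ) (α β : ℝ) (f : (Fin n → ℤ) → ℝ) : Prop :=
  ∀ (x : Fin n → ℤ) (i : Fin n), inGrid k x →
    inGrid k (Function.update x i (x i + 1)) →
      α ≤ f (Function.update x i (x i + 1)) - f x ∧
      f (Function.update x i (x i + 1)) - f x ≤ β

lemma key_lemma {n k : ℕ} (α β : ℝ) (f : (Fin n → ℤ) → ℝ)
    (hf : IsABLip k α β f) :
    ∀ N : ℕ, ∀ x z : Fin n → ℤ, inGrid k x → inGrid k z → (∀ i, z i ≤ x i) →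
      ∑ i, (x i - z i) = (N : ℤ) →
      α * N ≤ f x - f z ∧ f x - f z ≤ β * N := by
  intro N
  induction N with
  | zero =>
    intro x z hx hz hle hsum
    have hxz : x = z := by
      funext i
      have h0 : ∀ i ∈ Finset.univ, (0:ℤ) ≤ x i - z i := fun i _ => by
        linarith [hle i]
      have := (Finset.sum_eq_zero_iff_of_nonneg h0).1 (by simpa using hsum) i
        (Finset.mem_univ i)
      linarith
    simp [hxz]
  | succ N ih =>
    intro x z hx hz hle hsum
    have hpos : ∃ i, z i < x i := by
      by_contra h
      push_neg at h
      have : ∀ i, x i = z i := fun i => le_antisymm (h i) (hle i)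
      simp [this] at hsum
      omega
    obtain ⟨i, hi⟩ := hpos
    set z' := Function.update z i (z i + 1) with hz'
    have hz'grid : inGrid k z' := by
      intro j
      rcases eq_or_ne j i with rfl | hne
      · simp only [hz', Function.update_self]
        exact ⟨by linarith [(hz j).1], by linarith [hi, (hx j).2]⟩
      · simp only [hz', Function.update_of_ne hne]
        exact hz j
    have hle' : ∀ j, z' j ≤ x j := by
      intro j
      rcases eq_or_ne j i with rfl | hne
      · simp only [hz', Function.update_self]; omega
      · simp only [hz', Function.update_of_ne hne]; exact hle j
    have hsum' : ∑ j, (x j - z' j) = (N : ℤ) := by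
      have h1 : ∑ j, (x j - z j) =
          (x i - z i) + ∑ j ∈ Finset.univ.erase i, (x j - z j) :=
        (Finset.add_sum_erase _ _ (Finset.mem_univ i)).symm
      have h2 : ∑ j, (x j - z' j) =
          (x i - z' i) + ∑ j ∈ Finset.univ.erase i, (x j - z' j) :=
        (Finset.add_sum_erase _ _ (Finset.mem_univ i)).symm
      have h3 : ∑ j ∈ Finset.univ.erase i, (x j - z' j) =
          ∑ j ∈ Finset.univ.erase i, (x j - z j) := by
        apply Finset.sum_congr rfl
        intro j hj
        have hne : j ≠ i := Finset.ne_of_mem_erase hj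
        simp [hz', Function.update_of_ne hne]
      rw [h2, h3]
      have : z' i = z i + 1 := by simp [hz']
      rw [this]
      rw [h1] at hsum
      push_cast at hsum ⊢
      linarith
    have hstep := hf z i hz (by simpa [hz'] using hz'grid)
    have hIH := ih x z' hx hz'grid hle' hsum'
    constructor
    · push_cast
      have : f x - f z = (f x - f z') + (f z' - f z) := by ring
      rw [this]
      have h1 := hIH.1
      have h2 := hstep.1
      simp only [hz'] at *
      linarith
    · push_cast
      have : f x - f z = (f x - f z') + (f z' - f z) := by ring
      rw [this]
      have h1 := hIH.2
      have h2 := hstep.2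
      simp only [hz'] at *
      linarith

/-- `f` is `(α,β)`-Lipschitz iff `f(x) - f(y) ≤ d(x,y)` for all grid points. -/
theorem isABLip_iff_le_gd {n k : ℕ} (α β : ℝ) (hαβ : α ≤ β)
    (f : (Fin n → ℤ) → ℝ) :
    IsABLip k α β f ↔
      ∀ x y : Fin n → ℤ, inGrid k x → inGrid k y → f x - f y ≤ gd α β x y := by
  constructor
  · intro hf x y hx hy
    set m : Fin n → ℤ := hcd x y with hm
    have hmgrid : inGrid k m := by
      intro i
      constructor
      · exact le_min (hx i).1 (hy i).1
      · exact min_le_of_left_le (hx i).2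
    have hmx : ∀ i, m i ≤ x i := fun i => min_le_left _ _
    have hmy : ∀ i, m i ≤ y i := fun i => min_le_right _ _
    have hsx : (0:ℤ) ≤ ∑ i, (x i - m i) :=
      Finset.sum_nonneg fun i _ => by linarith [hmx i]
    have hsy : (0:ℤ) ≤ ∑ i, (y i - m i) :=
      Finset.sum_nonneg fun i _ => by linarith [hmy i]
    obtain ⟨Nx, hNx⟩ := Int.eq_ofNat_of_zero_le hsx
    obtain ⟨Ny, hNy⟩ := Int.eq_ofNat_of_zero_le hsy
    have hx' := (key_lemma α β f hf Nx x m hx hmgrid hmx hNx).2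
    have hy' := (key_lemma α β f hf Ny y m hy hmgrid hmy hNy).1
    have e1 : ∑ i, ((x i - hcd x y i : ℤ) : ℝ) = (Nx : ℝ) := by
      push_cast [← hm]
      rw [← Int.cast_natCast, ← hNx]
      push_cast
      rfl
    have e2 : ∑ i, ((y i - hcd x y i : ℤ) : ℝ) = (Ny : ℝ) := by
      push_cast [← hm]
      rw [← Int.cast_natCast, ← hNy]
      push_cast
      rfl
    rw [gd, e1, e2]
    linarith
  · intro h x i hx hx'
    constructor
    · have := h x (Function.update x i (x i + 1)) hx hx'
      have hm : hcd x (Function.update x i (x i + 1)) = x := by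
        funext j
        rcases eq_or_ne j i with rfl | hne
        · simp [hcd, Function.update_self]
        · simp [hcd, Function.update_of_ne hne]
      rw [gd, hm] at this
      have e1 : ∑ j, ((x j - x j : ℤ) : ℝ) = 0 := by simp
      have e2 : ∑ j, ((Function.update x i (x i + 1) j - x j : ℤ) : ℝ) = 1 := by
        rw [Finset.sum_eq_single i]
        · simp
        · intro j _ hne; simp [Function.update_of_ne hne]
        · simp
      rw [e1, e2] at this
      linarith
    · have := h (Function.update x i (x i + 1)) x hx' hx
      have hm : hcd (Function.update x i (x i + 1)) x = x := by
        funext j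
        rcases eq_or_ne j i with rfl | hne
        · simp [hcd, Function.update_self]
        · simp [hcd, Function.update_of_ne hne]
      rw [gd, hm] at this
      have e1 : ∑ j, ((x j - x j : ℤ) : ℝ) = 0 := by simp
      have e2 : ∑ j, ((Function.update x i (x i + 1) j - x j : ℤ) : ℝ) = 1 := by
        rw [Finset.sum_eq_single i]
        · simp
        · intro j _ hne; simp [Function.update_of_ne hne]
        · simp
      rw [e1, e2] at this
      linarith
end

section
/- For the monotonicity property: the minimum vertex cover of the violation graph (edges between comparable pairs x ≺ y with f(x) > f(y)) has size exactly ε_f · |D|, where ε_f is the distance of f to monotonicity. -/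
open Finset

/-- From a vertex cover of the violation graph, build a monotone function
agreeing with `f` outside the cover. -/
lemma exists_monotone_of_cover {D : Type*} [Fintype D] [PartialOrder D]
    [Nonempty D] (f : D → ℝ) (U : Finset D)
    (hU : ∀ x y : D, x < y → f y < f x → x ∈ U ∨ y ∈ U) :
    ∃ g : D → ℝ, Monotone g ∧ ∀ x, f x ≠ g x → x ∈ U := by
  classical
  set c : ℝ := Finset.univ.inf' univ_nonempty f with hc
  have hS : ∀ x : D,
      (insert c ((univ.filter (fun z => z ∉ U ∧ z ≤ x)).image f)).Nonempty :=
    fun x => insert_nonempty _ _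
  refine ⟨fun x => (insert c ((univ.filter (fun z => z ∉ U ∧ z ≤ x)).image f)).max' (hS x),
    ?_, ?_⟩
  · intro x y hxy
    apply Finset.max'_subset
    apply insert_subset_insert
    apply image_subset_image
    intro z hz
    simp only [mem_filter, mem_univ, true_and] at *
    exact ⟨hz.1, hz.2.trans hxy⟩
  · intro x hx
    by_contra hxU
    apply hx
    apply le_antisymm
    · apply Finset.le_max'
      apply mem_insert_of_mem
      exact mem_image_of_mem f (by simp [hxU])
    · apply Finset.max'_le
      intro b hb
      rcases mem_insert.mp hb with rfl | hb
      · exact Finset.inf'_le f (mem_univ x)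
      · obtain ⟨z, hz, rfl⟩ := mem_image.mp hb
        simp only [mem_filter, mem_univ, true_and] at hz
        obtain ⟨hzU, hzx⟩ := hz
        rcases eq_or_lt_of_le hzx with rfl | hlt
        · exact le_rfl
        · by_contra h
          rcases hU z x hlt (not_le.mp h) with h' | h'
          exacts [hzU h', hxU h']

/-- For monotonicity: minimum vertex cover of the violation graph equals the
distance (number of modifications) to monotonicity. -/
theorem min_vertex_cover_eq_distance_monotone {n k : ℕ}
    (f : (Fin n → Fin k) → ℝ) :
    sInf {m : ℕ | ∃ U : Finset (Fin n → Fin k),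
        (∀ x y : Fin n → Fin k, x < y → f y < f x → x ∈ U ∨ y ∈ U) ∧
        U.card = m} =
    sInf {m : ℕ | ∃ g : (Fin n → Fin k) → ℝ, Monotone g ∧
        Nat.card {x : Fin n → Fin k // f x ≠ g x} = m} := by
  classical
  set A := {m : ℕ | ∃ U : Finset (Fin n → Fin k),
      (∀ x y : Fin n → Fin k, x < y → f y < f x → x ∈ U ∨ y ∈ U) ∧
      U.card = m} with hA
  set B := {m : ℕ | ∃ g : (Fin n → Fin k) → ℝ, Monotone g ∧
      Nat.card {x : Fin n → Fin k // f x ≠ g x} = m} with hB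
  have hcard : ∀ g : (Fin n → Fin k) → ℝ,
      Nat.card {x : Fin n → Fin k // f x ≠ g x}
        = (univ.filter (fun x => f x ≠ g x)).card := by
    intro g
    rw [Nat.card_eq_fintype_card, Fintype.card_subtype]
  have hBA : B ⊆ A := by
    rintro m ⟨g, hg, rfl⟩
    refine ⟨univ.filter (fun x => f x ≠ g x), ?_, (hcard g).symm⟩
    intro x y hxy hfy
    by_contra hcon
    push_neg at hcon
    obtain ⟨h1, h2⟩ := hcon
    simp only [mem_filter, mem_univ, true_and, not_not] at h1 h2
    exact absurd (hg hxy.le) (by rw [← h1, ← h2] at *; exact not_le.mpr hfy)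
  have hAne : A.Nonempty :=
    ⟨_, univ, fun x y _ _ => Or.inl (mem_univ x), rfl⟩
  have hBne : B.Nonempty := ⟨_, fun _ => (0 : ℝ), monotone_const, rfl⟩
  apply le_antisymm
  · exact Nat.sInf_le (hBA (Nat.sInf_mem hBne))
  · obtain ⟨U, hU, hUcard⟩ := Nat.sInf_mem hAne
    rcases isEmpty_or_nonempty (Fin n → Fin k) with he | hne
    · have : (0 : ℕ) ∈ B := ⟨fun _ => (0 : ℝ), monotone_const, by
        rw [hcard]; simp⟩
      exact le_trans (Nat.sInf_le this) (Nat.zero_le _)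
    · obtain ⟨g, hg, hgU⟩ := exists_monotone_of_cover f U hU
      have hmem : Nat.card {x : Fin n → Fin k // f x ≠ g x} ∈ B := ⟨g, hg, rfl⟩
      refine le_trans (Nat.sInf_le hmem) ?_
      rw [hcard, ← hUcard]
      apply Finset.card_le_card
      intro x hx
      simp only [mem_filter, mem_univ, true_and] at hx
      exact hgU x hx
end
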